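/- arXiv:1207.3292 — 6 statements merged into one kernel-verified Lean document; each statement's English description precedes it below -/
import Mathlib

section
/- For all real numbers a, λ̄, P1A, P1C, P2 with 0 < λ̄, 0 ≤ P1A, 0 ≤ P1C, 0 ≤ P2, and 0 < a ≤ 1, we have (1/2)·log(1 + P1A/λ̄) + (1/2)·log(1 + (a²·P1C/λ̄)/(1 + a²·P1A/λ̄ + P2/λ̄)) ≤ (1/2)·log(1 + P1A/λ̄ + P1C/λ̄). -/
lemma aux_0 (s A C Q : ℝ) (hA : 0 ≤ A) (hC : 0 ≤ C) (hQ : 0 ≤ Q)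
    (hs : 0 ≤ s) (hs1 : s ≤ 1) :
    (1/2) * Real.log (1 + A) + (1/2) * Real.log (1 + (s * C) / (1 + s * A + Q)) ≤
    (1/2) * Real.log (1 + A + C) := by
  have hD : 0 < 1 + s * A + Q := by nlinarith
  have hx : 0 < 1 + A := by linarith
  have hy : 0 < 1 + (s * C) / (1 + s * A + Q) := by
    have : 0 ≤ (s * C) / (1 + s * A + Q) := div_nonneg (mul_nonneg hs hC) hD.le
    linarith
  rw [← mul_add, ← Real.log_mul hx.ne' hy.ne']
  have hkey : (1 + A) * (1 + (s * C) / (1 + s * A + Q)) ≤ 1 + A + C := by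
    have e : (1 + A) * (1 + (s * C) / (1 + s * A + Q))
        = 1 + A + ((1 + A) * (s * C)) / (1 + s * A + Q) := by ring
    rw [e]
    have : ((1 + A) * (s * C)) / (1 + s * A + Q) ≤ C := by
      rw [div_le_iff₀ hD]
      nlinarith [mul_nonneg hC (sub_nonneg.mpr hs1), mul_nonneg hC hQ,
        mul_nonneg (mul_nonneg hA hC) (sub_nonneg.mpr hs1)]
    linarith
  have := Real.log_le_log (mul_pos hx hy) hkey
  linarith

theorem stmt_0 (a lb P1A P1C P2 : ℝ) (hlb : 0 < lb) (hA : 0 ≤ P1A)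
    (hC : 0 ≤ P1C) (h2 : 0 ≤ P2) (ha : 0 < a) (ha1 : a ≤ 1) :
    (1/2) * Real.log (1 + P1A/lb) +
      (1/2) * Real.log (1 + (a^2 * P1C/lb) / (1 + a^2 * P1A/lb + P2/lb)) ≤
    (1/2) * Real.log (1 + P1A/lb + P1C/lb) := by
  have e1 : a^2 * P1C/lb = a^2 * (P1C/lb) := mul_div_assoc _ _ _
  have e2 : a^2 * P1A/lb = a^2 * (P1A/lb) := mul_div_assoc _ _ _
  rw [e1, e2]
  exact aux_0 (a^2) (P1A/lb) (P1C/lb) (P2/lb) (div_nonneg hA hlb.le)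
    (div_nonneg hC hlb.le) (div_nonneg h2 hlb.le) (sq_nonneg a)
    (pow_le_one₀ ha.le ha1)
end

section
/- For all real numbers a, b, λ̄, P1A, P1C, P2 with 0 < λ̄, 0 ≤ P1A, 0 ≤ P1C, 0 ≤ P2, 0 < a ≤ 1, b ≥ 1, and a·b ≥ 1, we have (1/2)·log(1 + P1A/λ̄) + (1/2)·log(1 + (a²·P1C/λ̄)/(1 + a²·P1A/λ̄ + P2/λ̄)) + (1/2)·log(1 + (P2/λ̄)/(1 + a²·P1A/λ̄)) ≤ (1/2)·log(1 + P1A/λ̄ + P1C/λ̄ + b²·P2/λ̄). -/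
theorem stmt_6 (a b lb P1A P1C P2 : ℝ) (hlb : 0 < lb) (hA : 0 ≤ P1A)
    (hC : 0 ≤ P1C) (h2 : 0 ≤ P2) (ha : 0 < a) (ha1 : a ≤ 1) (hb : 1 ≤ b)
    (hab : 1 ≤ a * b) :
    (1/2) * Real.log (1 + P1A/lb) +
      (1/2) * Real.log (1 + (a^2 * P1C/lb) / (1 + a^2 * P1A/lb + P2/lb)) +
      (1/2) * Real.log (1 + (P2/lb) / (1 + a^2 * P1A/lb)) ≤
    (1/2) * Real.log (1 + P1A/lb + P1C/lb + b^2 * P2/lb) := by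
  rw [show a^2 * P1C/lb = a^2 * (P1C/lb) by ring,
      show a^2 * P1A/lb = a^2 * (P1A/lb) by ring,
      show b^2 * P2/lb = b^2 * (P2/lb) by ring]
  set x := P1A/lb with hxdef
  set y := P1C/lb with hydef
  set z := P2/lb with hzdef
  have hx : 0 ≤ x := div_nonneg hA hlb.le
  have hy : 0 ≤ y := div_nonneg hC hlb.le
  have hz : 0 ≤ z := div_nonneg h2 hlb.le
  have ha2 : 0 < a^2 := by positivity
  have ha2' : a^2 ≤ 1 := by nlinarith
  have hb2 : 1 ≤ b^2 := by nlinarith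
  have hab2 : 1 ≤ a^2 * b^2 := by nlinarith
  have hD2 : 0 < 1 + a^2 * x := by positivity
  have hD1 : 0 < 1 + a^2 * x + z := by positivity
  have hA1 : 0 < 1 + x := by positivity
  have hB1 : 0 < 1 + (a^2 * y) / (1 + a^2 * x + z) := by positivity
  have hC1 : 0 < 1 + z / (1 + a^2 * x) := by positivity
  have hT : 0 < 1 + x + y + b^2 * z := by nlinarith
  have key : (1 + x) * (1 + (a^2 * y) / (1 + a^2 * x + z)) * (1 + z / (1 + a^2 * x))
      ≤ 1 + x + y + b^2 * z := by
    have heq : (1 + x) * (1 + (a^2 * y) / (1 + a^2 * x + z)) * (1 + z / (1 + a^2 * x))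
        = ((1 + x) * (1 + a^2 * x + z + a^2 * y)) / (1 + a^2 * x) := by
      field_simp
    rw [heq, div_le_iff₀ hD2]
    nlinarith [mul_nonneg hy (sub_nonneg.2 ha2'), mul_nonneg hz (sub_nonneg.2 hb2),
      mul_nonneg (mul_nonneg hx hz) (sub_nonneg.2 hab2)]
  calc (1/2) * Real.log (1 + x) + (1/2) * Real.log (1 + (a^2 * y) / (1 + a^2 * x + z))
        + (1/2) * Real.log (1 + z / (1 + a^2 * x))
      = (1/2) * Real.log ((1 + x) * (1 + (a^2 * y) / (1 + a^2 * x + z)) * (1 + z / (1 + a^2 * x))) := by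
        rw [Real.log_mul (by positivity) hC1.ne', Real.log_mul hA1.ne' hB1.ne']; ring
    _ ≤ (1/2) * Real.log (1 + x + y + b^2 * z) := by
        have := Real.log_le_log (by positivity) key
        linarith
end

section
/- For all real numbers a, b, λ̄, P1A, P2 with 0 < λ̄, 0 ≤ P1A, 0 ≤ P2, 0 < a ≤ 1, b ≥ 1, and a·b ≥ 1, we have (1/2)·log(1 + P1A/λ̄) + (1/2)·log(1 + (P2/λ̄)/(1 + a²·P1A/λ̄)) ≤ (1/2)·log(1 + P1A/λ̄ + b²·P2/λ̄). -/
theorem stmt_7 (a b lb P1A P2 : ℝ) (hlb : 0 < lb) (hA : 0 ≤ P1A)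
    (h2 : 0 ≤ P2) (ha : 0 < a) (ha1 : a ≤ 1) (hb : 1 ≤ b) (hab : 1 ≤ a * b) :
    (1/2) * Real.log (1 + P1A/lb) +
      (1/2) * Real.log (1 + (P2/lb) / (1 + a^2 * P1A/lb)) ≤
    (1/2) * Real.log (1 + P1A/lb + b^2 * P2/lb) := by
  have h1 : 0 ≤ P1A / lb := div_nonneg hA hlb.le
  have h2' : 0 ≤ P2 / lb := div_nonneg h2 hlb.le
  have ha2 : 0 ≤ a^2 * P1A / lb := div_nonneg (mul_nonneg (sq_nonneg a) hA) hlb.le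
  have hx : (0:ℝ) < 1 + P1A/lb := by linarith
  have hy : (0:ℝ) < 1 + a^2 * P1A/lb := by linarith
  have hz : (0:ℝ) < 1 + (P2/lb) / (1 + a^2 * P1A/lb) := by positivity
  rw [← mul_add]
  apply mul_le_mul_of_nonneg_left _ (by norm_num : (0:ℝ) ≤ 1/2)
  rw [← Real.log_mul hx.ne' hz.ne']
  apply Real.log_le_log (by positivity)
  have hb2 : 1 ≤ b^2 := by nlinarith
  have hab2 : 1 ≤ a^2 * b^2 := by nlinarith
  rw [← sub_nonneg]
  have heq : 1 + P1A/lb + b^2 * P2/lb -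
      (1 + P1A/lb) * (1 + (P2/lb) / (1 + a^2 * P1A/lb)) =
      ((b^2 - 1) * (P2/lb) + (a^2 * b^2 - 1) * (P2/lb) * (P1A/lb))
        / (1 + a^2 * P1A/lb) := by
    field_simp
    ring
  rw [heq]
  apply div_nonneg _ hy.le
  nlinarith [mul_nonneg (mul_nonneg h2' h1) (sub_nonneg.mpr hab2),
    mul_nonneg h2' (sub_nonneg.mpr hb2)]
end

section
/- For all real numbers a, b, λ̄, P1A, P1C, P2 with 0 < λ̄, 0 ≤ P1A, 0 ≤ P1C, 0 ≤ P2, 0 < a ≤ 1, b ≥ 1, and a·b ≥ 1, we have log(1 + (P2/λ̄)/(1 + a²·P1A/λ̄)) + (1/2)·log(1 + P1A/λ̄) + (1/2)·log(1 + (a²·P1C/λ̄)/(1 + a²·P1A/λ̄ + P2/λ̄)) ≤ (1/2)·log(1 + P1A/λ̄ + b²·P2/λ̄) + (1/2)·log(1 + P1C/λ̄ + b²·P2/λ̄). -/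
theorem stmt_8 (a b lb P1A P1C P2 : ℝ) (hlb : 0 < lb) (hA : 0 ≤ P1A)
    (hC : 0 ≤ P1C) (h2 : 0 ≤ P2) (ha : 0 < a) (ha1 : a ≤ 1) (hb : 1 ≤ b)
    (hab : 1 ≤ a * b) :
    Real.log (1 + (P2/lb) / (1 + a^2 * P1A/lb)) +
      (1/2) * Real.log (1 + P1A/lb) +
      (1/2) * Real.log (1 + (a^2 * P1C/lb) / (1 + a^2 * P1A/lb + P2/lb)) ≤
    (1/2) * Real.log (1 + P1A/lb + b^2 * P2/lb) +
      (1/2) * Real.log (1 + P1C/lb + b^2 * P2/lb) := by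
  have hx : 0 ≤ P1A/lb := div_nonneg hA hlb.le
  have hy : 0 ≤ P1C/lb := div_nonneg hC hlb.le
  have hz : 0 ≤ P2/lb := div_nonneg h2 hlb.le
  have ha2 : 0 < a^2 := by positivity
  have ha2le : a^2 ≤ 1 := by nlinarith
  have hb2 : 1 ≤ b^2 := by nlinarith
  have hab2 : 1 ≤ a^2*b^2 := by nlinarith
  set x := P1A/lb
  set y := P1C/lb
  set z := P2/lb
  have e1 : a^2 * P1A/lb = a^2 * x := by rw [mul_div_assoc]
  have e2 : a^2 * P1C/lb = a^2 * y := by rw [mul_div_assoc]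
  have e3 : b^2 * P2/lb = b^2 * z := by rw [mul_div_assoc]
  rw [e1, e2, e3]
  have hd1 : (0:ℝ) < 1 + a^2*x := by nlinarith
  have hd2 : (0:ℝ) < 1 + a^2*x + z := by nlinarith
  have hA1 : 1 + z/(1+a^2*x) = (1+a^2*x+z)/(1+a^2*x) := by field_simp
  have hC1 : 1 + (a^2*y)/(1+a^2*x+z) = (1+a^2*x+z+a^2*y)/(1+a^2*x+z) := by
    field_simp
  rw [hA1, hC1, Real.log_div (by positivity) (by positivity),
    Real.log_div (by positivity) (by positivity)]
  have p1 : (1+a^2*x+z)*(1+x) ≤ (1+x+b^2*z)*(1+a^2*x) := by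
    nlinarith [mul_nonneg hz hx, mul_nonneg hz (sub_nonneg.mpr hb2),
      mul_nonneg (mul_nonneg hz hx) (sub_nonneg.mpr hab2)]
  have p2 : 1+a^2*x+z+a^2*y ≤ (1+y+b^2*z)*(1+a^2*x) := by
    nlinarith [mul_nonneg hy (sub_nonneg.mpr ha2le), mul_nonneg (mul_nonneg ha2.le hx) hy,
      mul_nonneg hz (sub_nonneg.mpr hb2), mul_nonneg (mul_nonneg hx hz) (sub_nonneg.mpr hab2)]
  have key1 : Real.log (1+a^2*x+z) + Real.log (1+x)
      ≤ Real.log (1+x+b^2*z) + Real.log (1+a^2*x) := by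
    have h := Real.log_le_log (by positivity) p1
    rw [Real.log_mul (by positivity) (by positivity),
      Real.log_mul (by positivity) (by positivity)] at h
    linarith
  have key2 : Real.log (1+a^2*x+z+a^2*y)
      ≤ Real.log (1+y+b^2*z) + Real.log (1+a^2*x) := by
    have h := Real.log_le_log (by positivity) p2
    rw [Real.log_mul (by positivity) (by positivity)] at h
    linarith
  linarith
end

section
/- For all real numbers a, b, λ̄, P1A, P1C, P2 with 0 < λ̄, 0 ≤ P1A, 0 ≤ P1C, 0 ≤ P2, 0 < a ≤ 1, b ≥ 1, and a·b ≥ 1, we have (1/2)·log(1 + (a²·P1C/λ̄)/(1 + a²·P1A/λ̄ + P2/λ̄)) + (1/2)·log(1 + (P2/λ̄)/(1 + a²·P1A/λ̄)) ≤ (1/2)·log(1 + P1C/λ̄ + b²·P2/λ̄). -/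
theorem stmt_9 (a b lb P1A P1C P2 : ℝ) (hlb : 0 < lb) (hA : 0 ≤ P1A)
    (hC : 0 ≤ P1C) (h2 : 0 ≤ P2) (ha : 0 < a) (ha1 : a ≤ 1) (hb : 1 ≤ b)
    (hab : 1 ≤ a * b) :
    (1/2) * Real.log (1 + (a^2 * P1C/lb) / (1 + a^2 * P1A/lb + P2/lb)) +
      (1/2) * Real.log (1 + (P2/lb) / (1 + a^2 * P1A/lb)) ≤
    (1/2) * Real.log (1 + P1C/lb + b^2 * P2/lb) := by
  have hlb' := hlb.le
  have hp : 0 ≤ P1A/lb := div_nonneg hA hlb'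
  have hq : 0 ≤ P2/lb := div_nonneg h2 hlb'
  have hc : 0 ≤ P1C/lb := div_nonneg hC hlb'
  have hv : (0:ℝ) < 1 + a^2*P1A/lb := by positivity
  have hu : (0:ℝ) < 1 + a^2*P1A/lb + P2/lb := by positivity
  have hAp : (0:ℝ) < 1 + a^2*P1A/lb + P2/lb + a^2*P1C/lb := by positivity
  have e1 : 1 + (a^2 * P1C/lb) / (1 + a^2 * P1A/lb + P2/lb)
      = (1 + a^2*P1A/lb + P2/lb + a^2*P1C/lb)/(1 + a^2*P1A/lb + P2/lb) := by
    field_simp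
  have e2 : 1 + (P2/lb) / (1 + a^2 * P1A/lb)
      = (1 + a^2*P1A/lb + P2/lb)/(1 + a^2*P1A/lb) := by
    field_simp
  rw [e1, e2, Real.log_div hAp.ne' hu.ne', Real.log_div hu.ne' hv.ne']
  have key : Real.log (1 + a^2*P1A/lb + P2/lb + a^2*P1C/lb)
      - Real.log (1 + a^2*P1A/lb) ≤ Real.log (1 + P1C/lb + b^2*P2/lb) := by
    rw [← Real.log_div hAp.ne' hv.ne']
    apply Real.log_le_log (by positivity)
    rw [div_le_iff₀ hv]
    have h1 : (0:ℝ) ≤ (1 - a^2) * (P1C/lb) := mul_nonneg (by nlinarith [mul_nonneg ha.le ha.le]) hc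
    have h2' : (0:ℝ) ≤ (b^2 - 1) * (P2/lb) := mul_nonneg (by nlinarith) hq
    have h3 : (0:ℝ) ≤ (P1C/lb) * (a^2*(P1A/lb)) := by positivity
    have h4 : (0:ℝ) ≤ (b^2*(P2/lb)) * (a^2*(P1A/lb)) := by positivity
    have hmd1 : a^2*P1A/lb = a^2*(P1A/lb) := by ring
    have hmd2 : a^2*P1C/lb = a^2*(P1C/lb) := by ring
    have hmd3 : b^2*P2/lb = b^2*(P2/lb) := by ring
    rw [hmd1, hmd2, hmd3]
    nlinarith [h1, h2', h3, h4]
  linarith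
end

section
/- For all real numbers a, λ̄, P1A, P1C, P2 with 0 < λ̄, 0 ≤ P1A, 0 ≤ P1C, 0 ≤ P2, and 0 < a ≤ 1, we have (a²·P1C/(λ̄ + a²·P1A + P2))·(1 + P1A/λ̄) + (P2/(λ̄ + a²·P1A))·(1 + P1A/λ̄) + (P2/(λ̄ + a²·P1A))·(1 + P1A/λ̄)·(a²·P1C/(λ̄ + a²·P1A + P2)) ≤ P1C/λ̄ + b²·P2/λ̄ for every real b with b ≥ 1 and a·b ≥ 1. -/
theorem stmt_10 (a lb P1A P1C P2 : ℝ) (hlb : 0 < lb) (hA : 0 ≤ P1A)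
    (hC : 0 ≤ P1C) (h2 : 0 ≤ P2) (ha : 0 < a) (ha1 : a ≤ 1) :
    ∀ b : ℝ, 1 ≤ b → 1 ≤ a * b →
      (a^2 * P1C / (lb + a^2 * P1A + P2)) * (1 + P1A/lb) +
        (P2 / (lb + a^2 * P1A)) * (1 + P1A/lb) +
        (P2 / (lb + a^2 * P1A)) * (1 + P1A/lb) *
          (a^2 * P1C / (lb + a^2 * P1A + P2)) ≤
      P1C/lb + b^2 * P2/lb := by
  intro b hb hab
  have hD2 : (0:ℝ) < lb + a^2 * P1A := by positivity
  have hD1 : (0:ℝ) < lb + a^2 * P1A + P2 := by positivity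
  have ha2 : a^2 ≤ 1 := by nlinarith
  have hab2 : 1 ≤ a^2 * b^2 := by nlinarith
  have hb2 : 1 ≤ b^2 := by nlinarith
  have h1 : (a^2 * P1C / (lb + a^2 * P1A + P2)) * (1 + P1A/lb) *
      (1 + P2 / (lb + a^2 * P1A)) ≤ P1C/lb := by
    have key : 0 ≤ P1C * (lb + a^2 * P1A + P2) * (lb * (1 - a^2)) := by
      have : 0 ≤ 1 - a^2 := by linarith
      positivity
    field_simp
    nlinarith [key, mul_nonneg (mul_nonneg hC hD1.le) hlb.le,
      mul_nonneg (mul_nonneg hC hlb.le) (sub_nonneg.2 ha2)]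
  have h2 : (P2 / (lb + a^2 * P1A)) * (1 + P1A/lb) ≤ b^2 * P2/lb := by
    field_simp
    nlinarith [mul_nonneg (mul_nonneg h2 hlb.le) hlb.le,
      mul_nonneg (mul_nonneg h2 hlb.le) hA,
      mul_nonneg h2 hA, mul_nonneg (mul_nonneg h2 hA) hA,
      mul_nonneg (mul_nonneg h2 hlb.le) (sub_nonneg.2 hb2),
      mul_nonneg (mul_nonneg h2 hA) (sub_nonneg.2 hab2)]
  have heq : (a^2 * P1C / (lb + a^2 * P1A + P2)) * (1 + P1A/lb) +
        (P2 / (lb + a^2 * P1A)) * (1 + P1A/lb) +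
        (P2 / (lb + a^2 * P1A)) * (1 + P1A/lb) *
          (a^2 * P1C / (lb + a^2 * P1A + P2)) =
      (a^2 * P1C / (lb + a^2 * P1A + P2)) * (1 + P1A/lb) *
        (1 + P2 / (lb + a^2 * P1A)) +
      (P2 / (lb + a^2 * P1A)) * (1 + P1A/lb) := by ring
  rw [heq]
  have : b^2 * P2 / lb = b^2 * P2/lb := by ring
  linarith [h1, h2]
end
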